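/- Let P : X → ℂ be a continuous polynomial, i.e., P(x) = ∑_{k=0}^N M_k(x, …, x) where each M_k is a continuous k-linear map from X^k to ℂ. If P is bounded on 𝔻_X, then P is weakly continuous on bounded sets: for every bounded subset S of X, the restriction of P to S is continuous with respect to the weak topology σ(X, X^*). -/

import Mathlib

open Filter Topology Metric

noncomputable section

structure NormalizedSchauderBasisC (X : Type*) [NormedAddCommGroup X] [NormedSpace ℂ X] where
  e : ℕ → X
  coord : ℕ → X →L[ℂ] ℂ
  norm_e : ∀ j, ‖e j‖ = 1
  coord_e : ∀ i j, coord i (e j) = if i = j then 1 else 0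
  coord_bdd : ∃ C : ℝ, ∀ j, ‖coord j‖ ≤ C
  expand : ∀ x : X,
    Tendsto (fun n => ∑ j ∈ Finset.range n, coord j x • e j) atTop (nhds x)

def polydisk {X : Type*} [NormedAddCommGroup X] [NormedSpace ℂ X]
    (B : NormalizedSchauderBasisC X) (r : ℕ → ℝ) : Set X :=
  {x | ∀ j, ‖B.coord j x‖ < r j}

/-- `P` is weakly continuous on the set `S`: the restriction of `P` to `S` is continuous for
the weak topology `σ(X, X^*)`. -/
def WeaklyContinuousOn {X : Type*} [NormedAddCommGroup X] [NormedSpace ℂ X]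
    (P : X → ℂ) (S : Set X) : Prop :=
  ContinuousOn (fun x : WeakSpace ℂ X => P ((toWeakSpace ℂ X).symm x))
    ((toWeakSpace ℂ X) '' S)


namespace Stmt2Aux

local notation "conj'" => starRingEnd ℂ

lemma parseval {L : ℕ} (hL : 0 < L) (c : ℕ → ℂ) (φ : ℂ → ℂ) (C : ℝ)
    (hφ : ∀ ω : ℂ, ‖ω‖ = 1 → φ ω = ∑ e ∈ Finset.range L, c e * ω ^ e)
    (hC : ∀ ω : ℂ, ‖ω‖ = 1 → ‖φ ω‖ ≤ C) :
    ∑ e ∈ Finset.range L, ‖c e‖ ^ 2 ≤ C ^ 2 := by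
  set ζ : ℂ := Complex.exp (2 * Real.pi * Complex.I / L) with hζ
  have hprim : IsPrimitiveRoot ζ L := Complex.isPrimitiveRoot_exp L hL.ne'
  have hζpow : ζ ^ L = 1 := hprim.pow_eq_one
  have hζnorm : ‖ζ‖ = 1 := by
    have h1 : ‖ζ‖ ^ L = 1 := by rw [← norm_pow, hζpow, norm_one]
    have h0 : (0:ℝ) ≤ ‖ζ‖ := norm_nonneg _
    rcases pow_eq_one_iff_cases.mp h1 with h | h | h
    · omega
    · exact h
    · nlinarith [h.1]
  have hnorm : ∀ j : ℕ, ‖ζ ^ j‖ = 1 := by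
    intro j; rw [norm_pow, hζnorm, one_pow]
  have hconj : ∀ m : ℕ, ζ ^ m * conj' (ζ ^ m) = 1 := by
    intro m
    rw [Complex.mul_conj, Complex.normSq_eq_norm_sq, hnorm]
    norm_num
  have hterm : ∀ e e' j : ℕ, (ζ ^ j) ^ e * conj' ((ζ ^ j) ^ e')
      = (ζ ^ e * conj' (ζ ^ e')) ^ j := by
    intro e e' j
    rw [pow_right_comm ζ j e, pow_right_comm ζ j e', map_pow, ← mul_pow]
  have key : ∀ e ∈ Finset.range L, ∀ e' ∈ Finset.range L,
      ∑ j ∈ Finset.range L, (ζ ^ j) ^ e * conj' ((ζ ^ j) ^ e')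
        = if e = e' then (L : ℂ) else 0 := by
    intro e he e' he'
    rw [Finset.mem_range] at he he'
    by_cases hee : e = e'
    · subst hee
      rw [if_pos rfl]
      calc ∑ j ∈ Finset.range L, (ζ ^ j) ^ e * conj' ((ζ ^ j) ^ e)
          = ∑ _j ∈ Finset.range L, (1:ℂ) := by
            refine Finset.sum_congr rfl fun j _ => ?_
            rw [hterm, hconj, one_pow]
        _ = (L : ℂ) := by rw [Finset.sum_const, Finset.card_range, nsmul_eq_mul, mul_one]
    · have hwne : ζ ^ e * conj' (ζ ^ e') ≠ 1 := by
        intro hw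
        have heq : ζ ^ e = ζ ^ e' := by
          have h2 : ζ ^ e * (conj' (ζ ^ e') * ζ ^ e') = ζ ^ e' := by
            rw [← mul_assoc, hw, one_mul]
          rwa [mul_comm (conj' (ζ ^ e')) (ζ ^ e'), hconj e', mul_one] at h2
        exact hee (hprim.pow_inj he he' heq)
      have hwL : (ζ ^ e * conj' (ζ ^ e')) ^ L = 1 := by
        rw [mul_pow, ← map_pow]
        have h1 : (ζ ^ e) ^ L = 1 := by
          rw [← pow_mul, mul_comm, pow_mul, hζpow, one_pow]
        have h2 : (ζ ^ e') ^ L = 1 := by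
          rw [← pow_mul, mul_comm, pow_mul, hζpow, one_pow]
        rw [h1, h2, map_one, mul_one]
      calc ∑ j ∈ Finset.range L, (ζ ^ j) ^ e * conj' ((ζ ^ j) ^ e')
          = ∑ j ∈ Finset.range L, (ζ ^ e * conj' (ζ ^ e')) ^ j := by
            refine Finset.sum_congr rfl fun j _ => hterm e e' j
        _ = ((ζ ^ e * conj' (ζ ^ e')) ^ L - 1) / (ζ ^ e * conj' (ζ ^ e') - 1) :=
            geom_sum_eq hwne L
        _ = if e = e' then (L : ℂ) else 0 := by rw [hwL, if_neg hee]; simp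
  have hCnn : (0:ℝ) ≤ C := le_trans (norm_nonneg _) (hC 1 (by simp))
  have hval : ∀ j : ℕ, φ (ζ ^ j) = ∑ e ∈ Finset.range L, c e * (ζ ^ j) ^ e :=
    fun j => hφ _ (hnorm j)
  have expand : ∀ j : ℕ, φ (ζ ^ j) * conj' (φ (ζ ^ j))
      = ∑ e ∈ Finset.range L, ∑ e' ∈ Finset.range L,
          (c e * conj' (c e')) * ((ζ ^ j) ^ e * conj' ((ζ ^ j) ^ e')) := by
    intro j
    rw [hval j, map_sum, Finset.sum_mul_sum]
    refine Finset.sum_congr rfl fun e _ => Finset.sum_congr rfl fun e' _ => ?_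
    rw [map_mul]; ring
  have main : (L : ℂ) * ∑ e ∈ Finset.range L, ((‖c e‖ : ℂ)) ^ 2
      = ∑ j ∈ Finset.range L, (φ (ζ ^ j) * conj' (φ (ζ ^ j))) := by
    calc (L : ℂ) * ∑ e ∈ Finset.range L, ((‖c e‖ : ℂ)) ^ 2
        = ∑ e ∈ Finset.range L, ∑ e' ∈ Finset.range L,
            (c e * conj' (c e')) * (if e = e' then (L:ℂ) else 0) := by
          rw [Finset.mul_sum]
          refine Finset.sum_congr rfl fun e he => ?_
          rw [Finset.sum_eq_single_of_mem e he
            (fun b _ hb => by rw [if_neg (fun h => hb h.symm), mul_zero])]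
          rw [if_pos rfl, Complex.mul_conj, Complex.normSq_eq_norm_sq]
          push_cast; ring
      _ = ∑ e ∈ Finset.range L, ∑ e' ∈ Finset.range L, (c e * conj' (c e'))
            * ∑ j ∈ Finset.range L, ((ζ ^ j) ^ e * conj' ((ζ ^ j) ^ e')) := by
          refine Finset.sum_congr rfl fun e he => Finset.sum_congr rfl fun e' he' => ?_
          rw [key e he e' he']
      _ = ∑ j ∈ Finset.range L, (φ (ζ ^ j) * conj' (φ (ζ ^ j))) := by
          simp only [expand]
          conv_rhs => rw [Finset.sum_comm]
          refine Finset.sum_congr rfl fun e _ => ?_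
          conv_rhs => rw [Finset.sum_comm]
          refine Finset.sum_congr rfl fun e' _ => ?_
          rw [Finset.mul_sum]
  have hre : (L : ℝ) * ∑ e ∈ Finset.range L, ‖c e‖ ^ 2
      = ∑ j ∈ Finset.range L, ‖φ (ζ ^ j)‖ ^ 2 := by
    have h2 : ((L : ℝ) * ∑ e ∈ Finset.range L, ‖c e‖ ^ 2 : ℂ)
        = ((∑ j ∈ Finset.range L, ‖φ (ζ ^ j)‖ ^ 2 : ℝ) : ℂ) := by
      push_cast
      rw [main]
      refine Finset.sum_congr rfl fun j _ => ?_
      rw [Complex.mul_conj, Complex.normSq_eq_norm_sq]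
      push_cast; ring
    exact_mod_cast h2
  have hbound : ∑ j ∈ Finset.range L, ‖φ (ζ ^ j)‖ ^ 2 ≤ L * C ^ 2 := by
    calc ∑ j ∈ Finset.range L, ‖φ (ζ ^ j)‖ ^ 2
        ≤ ∑ _j ∈ Finset.range L, C ^ 2 := by
          refine Finset.sum_le_sum fun j _ => ?_
          have := hC _ (hnorm j)
          nlinarith [norm_nonneg (φ (ζ ^ j))]
      _ = L * C ^ 2 := by rw [Finset.sum_const, Finset.card_range, nsmul_eq_mul]
  have hLpos : (0:ℝ) < L := by exact_mod_cast hL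
  nlinarith [hre, hbound]

lemma coeff_bound {L : ℕ} (hL : 0 < L) (c : ℕ → ℂ) (φ : ℂ → ℂ) (C : ℝ)
    (hφ : ∀ ω : ℂ, ‖ω‖ = 1 → φ ω = ∑ e ∈ Finset.range L, c e * ω ^ e)
    (hC : ∀ ω : ℂ, ‖ω‖ = 1 → ‖φ ω‖ ≤ C) :
    ∀ e ∈ Finset.range L, ‖c e‖ ≤ C := by
  intro e he
  have h := parseval hL c φ C hφ hC
  have hCnn : (0:ℝ) ≤ C := le_trans (norm_nonneg _) (hC 1 (by simp))
  have h1 : ‖c e‖ ^ 2 ≤ C ^ 2 :=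
    le_trans (Finset.single_le_sum (f := fun i => ‖c i‖ ^ 2) (fun i _ => sq_nonneg _) he) h
  nlinarith [h1, hCnn, norm_nonneg (c e)]

lemma digits_inj (N : ℕ) : ∀ (Q : ℕ) (c d : ℕ → ℕ), (∀ p, p < Q → c p ≤ N) →
    (∀ p, p < Q → d p ≤ N) →
    (∑ p ∈ Finset.range Q, c p * (N+1)^p) = (∑ p ∈ Finset.range Q, d p * (N+1)^p) →
    ∀ p, p < Q → c p = d p := by
  intro Q
  induction Q with
  | zero => intro c d _ _ _ p hp; omega
  | succ Q ih =>
    intro c d hc hd heq p hp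
    rw [Finset.sum_range_succ' (fun p => c p * (N+1)^p) Q,
      Finset.sum_range_succ' (fun p => d p * (N+1)^p) Q] at heq
    have hrw : ∀ (c : ℕ → ℕ), ∑ x ∈ Finset.range Q, c (x+1) * (N+1)^(x+1)
        = (∑ x ∈ Finset.range Q, c (x+1) * (N+1)^x) * (N+1) := by
      intro c
      rw [Finset.sum_mul]
      refine Finset.sum_congr rfl fun x _ => ?_
      ring
    rw [hrw c, hrw d] at heq
    simp only [pow_zero, mul_one] at heq
    set A := ∑ x ∈ Finset.range Q, c (x+1) * (N+1)^x with hA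
    set B := ∑ x ∈ Finset.range Q, d (x+1) * (N+1)^x with hB
    have hc0 : c 0 ≤ N := hc 0 (by omega)
    have hd0 : d 0 ≤ N := hd 0 (by omega)
    have hmodc : (A * (N+1) + c 0) % (N+1) = c 0 := by
      rw [mul_comm, Nat.mul_add_mod, Nat.mod_eq_of_lt (by omega)]
    have hmodd : (B * (N+1) + d 0) % (N+1) = d 0 := by
      rw [mul_comm, Nat.mul_add_mod, Nat.mod_eq_of_lt (by omega)]
    have heq' : A * (N+1) + c 0 = B * (N+1) + d 0 := by omega
    have h0 : c 0 = d 0 := by rw [← hmodc, heq', hmodd]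
    have hAB : A = B := by
      have : A * (N+1) = B * (N+1) := by omega
      exact Nat.eq_of_mul_eq_mul_right (by omega) this
    match p, hp with
    | 0, _ => exact h0
    | (p+1), hp =>
      exact ih (fun x => c (x+1)) (fun x => d (x+1)) (fun x hx => hc (x+1) (by omega))
        (fun x hx => hd (x+1) (by omega)) hAB p (by omega)

lemma digits_unique (N Q i q : ℕ) (hi : i ≤ N) (hq : q < Q) (c : ℕ → ℕ)
    (hc : ∀ p, p < Q → c p ≤ N)
    (heq : ∑ p ∈ Finset.range Q, c p * (N+1)^p = i * (N+1)^q) :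
    ∀ p, p < Q → c p = if p = q then i else 0 := by
  refine digits_inj N Q c (fun p => if p = q then i else 0) hc
    (fun p _ => by by_cases h : p = q <;> simp [h, hi]) ?_
  rw [heq]
  have : ∀ p ∈ Finset.range Q, (if p = q then i else 0) * (N+1)^p
      = if p = q then i * (N+1)^p else 0 := by
    intro p _; split <;> simp
  rw [Finset.sum_congr rfl this, Finset.sum_ite_eq' (Finset.range Q) q
    (fun p => i * (N+1)^p), if_pos (Finset.mem_range.mpr hq)]

section Basis

variable {X : Type*} [NormedAddCommGroup X] [NormedSpace ℂ X]
variable (B : NormalizedSchauderBasisC X)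

def proj (n : ℕ) : X →L[ℂ] X := ∑ j ∈ Finset.range n, (B.coord j).smulRight (B.e j)

lemma proj_apply (n : ℕ) (x : X) :
    proj B n x = ∑ j ∈ Finset.range n, B.coord j x • B.e j := by
  simp [proj, ContinuousLinearMap.sum_apply, ContinuousLinearMap.smulRight_apply]

lemma coord_proj (j n : ℕ) (x : X) :
    B.coord j (proj B n x) = if j < n then B.coord j x else 0 := by
  rw [proj_apply, map_sum]
  have h1 : ∀ j' ∈ Finset.range n, B.coord j (B.coord j' x • B.e j')
      = if j = j' then B.coord j x else 0 := by
    intro j' _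
    rw [map_smul, B.coord_e j j', smul_eq_mul]
    by_cases h : j = j' <;> simp [h]
  rw [Finset.sum_congr rfl h1, Finset.sum_ite_eq (Finset.range n) j (fun j' => B.coord j x)]
  simp [Finset.mem_range]

lemma proj_comp (a b : ℕ) (hab : a ≤ b) (x : X) : proj B a (proj B b x) = proj B a x := by
  rw [proj_apply B a (proj B b x), proj_apply B a x]
  refine Finset.sum_congr rfl fun j hj => ?_
  rw [coord_proj, if_pos (lt_of_lt_of_le (Finset.mem_range.mp hj) hab)]

lemma coord_tail (j n : ℕ) (x : X) :
    B.coord j (x - proj B n x) = if j < n then 0 else B.coord j x := by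
  rw [map_sub, coord_proj]
  by_cases h : j < n <;> simp [h]

lemma proj_tendsto (x : X) : Tendsto (fun n => proj B n x) atTop (nhds x) := by
  have := B.expand x
  convert this using 2 with n
  exact proj_apply B n x

variable [CompleteSpace X]

lemma proj_bound : ∃ K : ℝ, 1 ≤ K ∧ ∀ n x, ‖proj B n x - x‖ ≤ K * ‖x‖ := by
  have hpt : ∀ x : X, ∃ C, ∀ n, ‖proj B n x‖ ≤ C := by
    intro x
    have h1 : Tendsto (fun n => ‖proj B n x‖) atTop (nhds ‖x‖) := (proj_tendsto B x).norm
    obtain ⟨C, hC⟩ := h1.bddAbove_range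
    exact ⟨C, fun n => hC (Set.mem_range_self n)⟩
  obtain ⟨C', hC'⟩ := banach_steinhaus hpt
  refine ⟨max C' 0 + 1 + 1, by nlinarith [le_max_right C' 0], fun n x => ?_⟩
  calc ‖proj B n x - x‖ ≤ ‖proj B n x‖ + ‖x‖ := norm_sub_le _ _
    _ ≤ ‖proj B n‖ * ‖x‖ + ‖x‖ := by
        exact add_le_add_left ((proj B n).le_opNorm x) _
    _ ≤ (max C' 0 + 1 + 1) * ‖x‖ := by
        have h2 : ‖proj B n‖ ≤ max C' 0 := le_max_of_le_left (hC' n)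
        nlinarith [norm_nonneg x, norm_nonneg (proj B n)]

end Basis

section Poly

variable {X : Type*} [NormedAddCommGroup X] [NormedSpace ℂ X]
variable {N : ℕ} (M : ∀ k : Fin (N + 1), ContinuousMultilinearMap ℂ (fun _ : Fin k => X) ℂ)

/-- The polynomial. -/
def Pf (x : X) : ℂ := ∑ k : Fin (N+1), M k (fun _ => x)

/-- The `i`-homogeneous (in `t`) part of `x ↦ Pf (x + t)`. -/
def Gf (i : ℕ) (x t : X) : ℂ :=
  ∑ k : Fin (N+1), ∑ S ∈ Finset.univ.filter (fun S : Finset (Fin k) => S.card = i),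
    M k (fun s => if s ∈ S then t else x)

lemma Gf_continuous (i : ℕ) (x : X) : Continuous fun t => Gf M i x t := by
  refine continuous_finset_sum _ fun k _ => continuous_finset_sum _ fun S _ => ?_
  exact (M k).coe_continuous.comp (continuous_pi fun s => by
    by_cases h : s ∈ S <;> simp [h] <;> fun_prop)

lemma piecewise_eq (k : ℕ) (S : Finset (Fin k)) (t x : X) :
    (S.piecewise (fun _ => t) (fun _ => x)) = fun s => if s ∈ S then t else x := by
  funext s
  by_cases h : s ∈ S
  · rw [Finset.piecewise_eq_of_mem _ _ _ h, if_pos h]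
  · rw [Finset.piecewise_eq_of_notMem _ _ _ h, if_neg h]

lemma Pf_single (x u : X) (c : ℂ) :
    Pf M (x + c • u) = ∑ i ∈ Finset.range (N+1), c ^ i * Gf M i x u := by
  unfold Pf Gf
  have hk : ∀ k : Fin (N+1), M k (fun _ => x + c • u)
      = ∑ i ∈ Finset.range (N+1), c ^ i *
          ∑ S ∈ Finset.univ.filter (fun S : Finset (Fin k) => S.card = i),
            M k (fun s => if s ∈ S then u else x) := by
    intro k
    have h1 : (fun _ : Fin k => x + c • u) = (fun _ : Fin k => c • u) + (fun _ => x) := by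
      funext s; simp [add_comm]
    have hadd := (M k).toMultilinearMap.map_add_univ (fun _ : Fin k => c • u) (fun _ => x)
    simp only [ContinuousMultilinearMap.coe_coe] at hadd
    rw [h1, hadd]
    have h2 : ∀ S : Finset (Fin k),
        M k (S.piecewise (fun _ => c • u) (fun _ => x))
          = c ^ S.card * M k (fun s => if s ∈ S then u else x) := by
      intro S
      have h3 : S.piecewise (fun _ : Fin k => c • u) (fun _ => x)
          = S.piecewise (fun s => c • (S.piecewise (fun _ => u) (fun _ => x)) s)
              (S.piecewise (fun _ => u) (fun _ => x)) := by
        funext s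
        by_cases h : s ∈ S <;>
          simp [Finset.piecewise_eq_of_mem, Finset.piecewise_eq_of_notMem, h]
      have h5 := (M k).toMultilinearMap.map_piecewise_smul (fun _ => c)
        (S.piecewise (fun _ => u) (fun _ => x)) S
      simp only [ContinuousMultilinearMap.coe_coe, Finset.prod_const] at h5
      rw [h3, h5, smul_eq_mul, piecewise_eq]
    have h4 : ∑ S : Finset (Fin k), M k (S.piecewise (fun _ => c • u) (fun _ => x))
        = ∑ S : Finset (Fin k), c ^ S.card * M k (fun s => if s ∈ S then u else x) :=
      Finset.sum_congr rfl fun S _ => h2 S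
    rw [h4]
    rw [← Finset.sum_fiberwise_of_maps_to (g := fun S : Finset (Fin k) => S.card)
      (t := Finset.range (N+1)) (fun S _ => Finset.mem_range.mpr
        (lt_of_le_of_lt (le_trans (Finset.card_le_univ S) (by simp)) k.isLt))
      (fun S => c ^ S.card * M k (fun s => if s ∈ S then u else x))]
    refine Finset.sum_congr rfl fun i _ => ?_
    rw [Finset.mul_sum]
    refine Finset.sum_congr rfl fun S hS => ?_
    rw [(Finset.mem_filter.mp hS).2]
  rw [Finset.sum_congr rfl (fun k _ => hk k), Finset.sum_comm]
  refine Finset.sum_congr rfl fun i _ => ?_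
  rw [Finset.mul_sum]

lemma Gf_zero (x t : X) : Gf M 0 x t = Pf M x := by
  unfold Gf Pf
  refine Finset.sum_congr rfl fun k _ => ?_
  have h1 : Finset.univ.filter (fun S : Finset (Fin k) => S.card = 0) = {∅} := by
    ext S; simp [Finset.card_eq_zero]
  rw [h1, Finset.sum_singleton]
  simp


lemma Gf_bound (D : ℝ) (x u : X)
    (hall : ∀ ω : ℂ, ‖ω‖ = 1 → ‖Pf M (x + ω • u)‖ ≤ D) :
    ∀ i ∈ Finset.range (N+1), ‖Gf M i x u‖ ≤ D := by
  refine coeff_bound (Nat.succ_pos N) (fun e => Gf M e x u)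
    (fun ω => Pf M (x + ω • u)) D (fun ω hω => ?_) hall
  show Pf M (x + ω • u) = ∑ e ∈ Finset.range (N+1), Gf M e x u * ω ^ e
  rw [Pf_single]
  exact Finset.sum_congr rfl fun i _ => mul_comm _ _

lemma Pf_polydisk_bound (B : NormalizedSchauderBasisC X) (C : ℝ)
    (hC : ∀ x ∈ polydisk B (fun _ => 1), ‖Pf M x‖ ≤ C)
    (ρ : ℝ) (hρ : 0 < ρ) (x : X) (hx : ∀ j, ‖B.coord j x‖ < ρ) :
    ‖Pf M x‖ ≤ ∑ i ∈ Finset.range (N+1), ρ^i * C := by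
  have hρc : (ρ : ℂ) ≠ 0 := by
    simp only [ne_eq, Complex.ofReal_eq_zero]; exact hρ.ne'
  set u : X := (ρ : ℂ)⁻¹ • x with hu
  have hxu : x = 0 + (ρ : ℂ) • u := by
    rw [zero_add, hu, smul_smul, mul_inv_cancel₀ hρc, one_smul]
  have hucoord : ∀ j, ‖B.coord j u‖ < 1 := by
    intro j
    rw [hu, map_smul, norm_smul, norm_inv, Complex.norm_real, Real.norm_eq_abs,
      abs_of_pos hρ]
    rw [inv_mul_lt_iff₀ hρ, mul_one]
    exact hx j
  have hGf : ∀ i ∈ Finset.range (N+1), ‖Gf M i 0 u‖ ≤ C := by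
    refine Gf_bound M C 0 u fun ω hω => ?_
    rw [zero_add]
    refine hC _ (fun j => ?_)
    rw [map_smul, norm_smul, hω, one_mul]
    exact hucoord j
  rw [hxu, Pf_single]
  calc ‖∑ i ∈ Finset.range (N+1), (ρ:ℂ) ^ i * Gf M i 0 u‖
      ≤ ∑ i ∈ Finset.range (N+1), ‖(ρ:ℂ) ^ i * Gf M i 0 u‖ := norm_sum_le _ _
    _ ≤ ∑ i ∈ Finset.range (N+1), ρ ^ i * C := by
        refine Finset.sum_le_sum fun i hi => ?_
        rw [norm_mul, norm_pow, Complex.norm_real, Real.norm_eq_abs, abs_of_pos hρ]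
        exact mul_le_mul_of_nonneg_left (hGf i hi) (pow_nonneg hρ.le i)

lemma Pf_expansion (x : X) (Q : ℕ) (u : Fin Q → X) (a : Fin Q → ℂ) :
    Pf M (x + ∑ q, a q • u q)
      = ∑ k : Fin (N+1), ∑ r : Fin k → Option (Fin Q),
          (∏ s, (r s).elim 1 a) * M k (fun s => (r s).elim x u) := by
  unfold Pf
  refine Finset.sum_congr rfl fun k _ => ?_
  have harg : (fun _ : Fin k => x + ∑ q, a q • u q)
      = fun _ : Fin k => ∑ o : Option (Fin Q), (o.elim 1 a) • (o.elim x u) := by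
    funext s
    rw [Fintype.sum_option]
    simp
  have hsum := (M k).toMultilinearMap.map_sum
      (g := fun (_ : Fin k) (o : Option (Fin Q)) => (o.elim 1 a) • (o.elim x u))
  simp only [ContinuousMultilinearMap.coe_coe] at hsum
  rw [harg, hsum]
  refine Finset.sum_congr rfl fun r _ => ?_
  have hsm := (M k).toMultilinearMap.map_smul_univ
    (fun s => (r s).elim 1 a) (fun s => (r s).elim x u)
  simp only [ContinuousMultilinearMap.coe_coe] at hsm
  rw [hsm, smul_eq_mul]

/-- The key coefficient identification. -/
lemma coeff_ident (x : X) (Q : ℕ) (u : Fin Q → X) (i : ℕ) (hi1 : 1 ≤ i) (hiN : i ≤ N)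
    (q : Fin Q) :
    ∑ k : Fin (N+1), ∑ r ∈ Finset.univ.filter
        (fun r : Fin k → Option (Fin Q) =>
          (∑ s, (r s).elim 0 (fun p => (N+1)^((p:ℕ)+1))) = i * (N+1)^((q:ℕ)+1)),
      M k (fun s => (r s).elim x u)
    = Gf M i x (u q) := by
  unfold Gf
  refine Finset.sum_congr rfl fun k _ => ?_
  set w : Option (Fin Q) → ℕ := fun o => o.elim 0 (fun p => (N+1)^((p:ℕ)+1)) with hw
  have hcount : ∀ r : Fin k → Option (Fin Q),
      (∑ s, w (r s)) = ∑ o : Option (Fin Q),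
        (Finset.univ.filter (fun s => r s = o)).card * w o := by
    intro r
    have h1 : ∀ s : Fin k, w (r s) = ∑ o : Option (Fin Q), if r s = o then w o else 0 := by
      intro s
      rw [Finset.sum_ite_eq Finset.univ (r s) w, if_pos (Finset.mem_univ _)]
    rw [Finset.sum_congr rfl fun s _ => h1 s, Finset.sum_comm]
    refine Finset.sum_congr rfl fun o _ => ?_
    rw [← Finset.sum_filter, Finset.sum_const, smul_eq_mul]
  have hchar : ∀ r : Fin k → Option (Fin Q),
      ((∑ s, w (r s)) = i * (N+1)^((q:ℕ)+1)) →
      (∀ s, r s = if r s = some q then some q else none)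
      ∧ (Finset.univ.filter (fun s => r s = some q)).card = i := by
    intro r hr
    rw [hcount r, Fintype.sum_option] at hr
    have hnone : (Finset.univ.filter (fun s => r s = none)).card * w none = 0 := by
      simp [hw]
    rw [hnone, zero_add] at hr
    set cntF : Fin Q → ℕ := fun p => (Finset.univ.filter (fun s => r s = some p)).card
      with hcntF
    set c' : ℕ → ℕ := fun m => if h : m < Q then cntF ⟨m, h⟩ else 0 with hc'
    have hrQ : ∑ m ∈ Finset.range Q, c' m * (N+1)^(m+1) = i * (N+1)^((q:ℕ)+1) := by
      rw [← hr, ← Fin.sum_univ_eq_sum_range (fun m => c' m * (N+1)^(m+1)) Q]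
      refine Finset.sum_congr rfl fun p _ => ?_
      have : c' (p : ℕ) = cntF p := by
        rw [hc']
        simp only [p.isLt, dif_pos, Fin.eta]
      rw [this]
      rfl
    have hshift : (∑ m ∈ Finset.range Q, c' m * (N+1)^m) * (N+1)
        = (i * (N+1)^(q:ℕ)) * (N+1) := by
      calc (∑ m ∈ Finset.range Q, c' m * (N+1)^m) * (N+1)
          = ∑ m ∈ Finset.range Q, c' m * (N+1)^(m+1) := by
            rw [Finset.sum_mul]; exact Finset.sum_congr rfl fun m _ => by ring
        _ = i * (N+1)^((q:ℕ)+1) := hrQ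
        _ = (i * (N+1)^(q:ℕ)) * (N+1) := by ring
    have hdig := digits_unique N Q i q hiN q.isLt c'
      (fun p hp => by
        rw [hc']
        simp only [hp, dif_pos]
        calc cntF ⟨p, hp⟩ ≤ (Finset.univ : Finset (Fin k)).card := Finset.card_filter_le _ _
          _ = (k : ℕ) := by simp
          _ ≤ N := by omega)
      (Nat.eq_of_mul_eq_mul_right (by omega) hshift)
    have hq : cntF q = i := by
      have := hdig (q : ℕ) q.isLt
      rw [if_pos rfl, hc'] at this
      simp only [q.isLt, dif_pos, Fin.eta] at this
      exact this
    have hnq : ∀ p : Fin Q, p ≠ q → cntF p = 0 := by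
      intro p hp
      have := hdig (p : ℕ) p.isLt
      rw [if_neg (fun h => hp (Fin.ext h)), hc'] at this
      simp only [p.isLt, dif_pos, Fin.eta] at this
      exact this
    refine ⟨fun s => ?_, hq⟩
    by_cases h : r s = some q
    · rw [if_pos h, h]
    · rw [if_neg h]
      match hrs : r s with
      | none => rfl
      | some p =>
        exfalso
        have hpq : p ≠ q := fun hh => h (by rw [hrs, hh])
        have h0 := hnq p hpq
        rw [hcntF] at h0
        have h1 := Finset.card_eq_zero.mp h0
        have h2 : s ∈ Finset.univ.filter (fun s => r s = some p) := by
          simp [hrs]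
        rw [h1] at h2
        exact absurd h2 (Finset.notMem_empty s)
  -- the bijection
  refine Finset.sum_nbij' (fun r => Finset.univ.filter (fun s => r s = some q))
    (fun S => fun s => if s ∈ S then some q else none) ?_ ?_ ?_ ?_ ?_
  · intro r hr
    rw [Finset.mem_filter] at hr
    exact Finset.mem_filter.mpr ⟨Finset.mem_univ _, (hchar r hr.2).2⟩
  · intro S hS
    rw [Finset.mem_filter] at hS
    refine Finset.mem_filter.mpr ⟨Finset.mem_univ _, ?_⟩
    have : ∀ s : Fin k, w (if s ∈ S then some q else none)
        = if s ∈ S then (N+1)^((q:ℕ)+1) else 0 := by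
      intro s; by_cases h : s ∈ S <;> simp [h, hw]
    calc ∑ s, w (if s ∈ S then some q else none)
        = ∑ s, if s ∈ S then (N+1)^((q:ℕ)+1) else 0 :=
          Finset.sum_congr rfl fun s _ => this s
      _ = S.card * (N+1)^((q:ℕ)+1) := by
          rw [← Finset.sum_filter, Finset.sum_const, smul_eq_mul]
          have hSS : Finset.univ.filter (fun s : Fin k => s ∈ S) = S := by ext s'; simp
          rw [hSS]
      _ = i * (N+1)^((q:ℕ)+1) := by rw [hS.2]
  · intro r hr
    rw [Finset.mem_filter] at hr
    funext s
    have h1 := (hchar r hr.2).1 s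
    by_cases h : r s = some q
    · simp only [Finset.mem_filter, Finset.mem_univ, true_and, h, if_pos]
    · simp only [Finset.mem_filter, Finset.mem_univ, true_and, h, if_false]
      rw [if_neg h] at h1
      exact h1.symm
  · intro S hS
    ext s
    by_cases h : s ∈ S <;> simp [Finset.mem_filter, h]
  · intro r hr
    rw [Finset.mem_filter] at hr
    congr 1
    funext s
    have h1 := (hchar r hr.2).1 s
    by_cases h : r s = some q
    · rw [h]
      simp only [Finset.mem_filter, Finset.mem_univ, true_and, h, if_pos]
      rfl
    · rw [if_neg h] at h1
      rw [h1]
      simp only [Finset.mem_filter, Finset.mem_univ, true_and, h, if_false]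
      rfl

lemma Pf_lipschitz (Rb : ℝ) (hRb : 0 ≤ Rb) (a b : X) (ha : ‖a‖ ≤ Rb) (hb : ‖b‖ ≤ Rb) :
    ‖Pf M a - Pf M b‖
      ≤ (∑ k : Fin (N+1), ‖M k‖ * (k:ℕ) * Rb^((k:ℕ)-1)) * ‖a - b‖ := by
  unfold Pf
  rw [← Finset.sum_sub_distrib]
  calc ‖∑ k : Fin (N+1), (M k (fun _ => a) - M k (fun _ => b))‖
      ≤ ∑ k : Fin (N+1), ‖M k (fun _ => a) - M k (fun _ => b)‖ := norm_sum_le _ _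
    _ ≤ ∑ k : Fin (N+1), ‖M k‖ * (k:ℕ) * Rb^((k:ℕ)-1) * ‖a - b‖ := by
        refine Finset.sum_le_sum fun k _ => ?_
        have h1 := (M k).norm_image_sub_le (fun _ => a) (fun _ => b)
        rw [Fintype.card_fin] at h1
        have hma : ‖(fun _ : Fin k => a)‖ ≤ Rb := pi_norm_le_iff_of_nonneg hRb |>.mpr fun _ => ha
        have hmb : ‖(fun _ : Fin k => b)‖ ≤ Rb := pi_norm_le_iff_of_nonneg hRb |>.mpr fun _ => hb
        have hmax : max ‖(fun _ : Fin k => a)‖ ‖(fun _ : Fin k => b)‖ ≤ Rb := max_le hma hmb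
        have hsub : ‖(fun _ : Fin k => a) - (fun _ : Fin k => b)‖ ≤ ‖a - b‖ :=
          pi_norm_le_iff_of_nonneg (norm_nonneg _) |>.mpr fun _ => le_refl _
        calc ‖M k (fun _ => a) - M k (fun _ => b)‖
            ≤ ‖M k‖ * (k:ℕ) * max ‖(fun _ : Fin k => a)‖ ‖(fun _ : Fin k => b)‖ ^ ((k:ℕ)-1)
              * ‖(fun _ : Fin k => a) - (fun _ : Fin k => b)‖ := h1
          _ ≤ ‖M k‖ * (k:ℕ) * Rb^((k:ℕ)-1)
                * ‖(fun _ : Fin k => a) - (fun _ : Fin k => b)‖ := by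
              have hp : max ‖(fun _ : Fin k => a)‖ ‖(fun _ : Fin k => b)‖ ^ ((k:ℕ)-1)
                  ≤ Rb^((k:ℕ)-1) :=
                pow_le_pow_left₀ (le_trans (norm_nonneg _) (le_max_left _ _)) hmax _
              have hnn1 : (0:ℝ) ≤ ‖M k‖ * (k:ℕ) := by positivity
              have hnn3 : (0:ℝ) ≤ ‖(fun _ : Fin k => a) - (fun _ : Fin k => b)‖ := norm_nonneg _
              exact mul_le_mul_of_nonneg_right (mul_le_mul_of_nonneg_left hp hnn1) hnn3
          _ ≤ ‖M k‖ * (k:ℕ) * Rb^((k:ℕ)-1) * ‖a - b‖ := by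
              refine mul_le_mul_of_nonneg_left hsub (by positivity)
    _ = (∑ k : Fin (N+1), ‖M k‖ * (k:ℕ) * Rb^((k:ℕ)-1)) * ‖a - b‖ :=
        (Finset.sum_mul _ _ _).symm

end Poly

section Tail

variable {X : Type*} [NormedAddCommGroup X] [NormedSpace ℂ X] [CompleteSpace X]
variable {N : ℕ} (M : ∀ k : Fin (N + 1), ContinuousMultilinearMap ℂ (fun _ : Fin k => X) ℂ)
variable (B : NormalizedSchauderBasisC X)

set_option maxHeartbeats 2000000 in
lemma tail_small (C : ℝ) (hC : ∀ x ∈ polydisk B (fun _ => 1), ‖Pf M x‖ ≤ C)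
    (i : ℕ) (hi1 : 1 ≤ i) (hiN : i ≤ N) (x₀ : X) (T : ℝ) (hT : 0 < T)
    (ε : ℝ) (hε : 0 < ε) :
    ∃ n : ℕ, ∀ h : X, ‖h‖ ≤ T → ‖Gf M i x₀ (h - proj B n h)‖ ≤ ε := by
  by_contra hcon
  push_neg at hcon
  obtain ⟨c₀', hc₀'⟩ := B.coord_bdd
  set c₀ : ℝ := max c₀' 0 with hc₀def
  have hc₀ : 0 ≤ c₀ := le_max_right _ _
  have hcoordle : ∀ j (x : X), ‖B.coord j x‖ ≤ c₀ * ‖x‖ := fun j x =>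
    le_trans ((B.coord j).le_opNorm x)
      (mul_le_mul_of_nonneg_right (le_max_of_le_left (hc₀' j)) (norm_nonneg x))
  set σ : ℝ := c₀ * ‖x₀‖ with hσdef
  have hσnn : 0 ≤ σ := mul_nonneg hc₀ (norm_nonneg _)
  set ρ : ℝ := σ + c₀ * T + 1 with hρdef
  have hρpos : 0 < ρ := by
    have : 0 ≤ c₀ * T := mul_nonneg hc₀ hT.le
    rw [hρdef]; linarith
  set D : ℝ := ∑ i' ∈ Finset.range (N+1), ρ^i' * C with hDdef
  have hCnn : 0 ≤ C := le_trans (norm_nonneg _)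
    (hC 0 (fun j => by rw [map_zero, norm_zero]; norm_num))
  have hDnn : 0 ≤ D :=
    Finset.sum_nonneg fun i' _ => mul_nonneg (pow_nonneg hρpos.le _) hCnn
  -- construction of blocks
  have step : ∀ n : ℕ, ∃ m : ℕ, n ≤ m ∧ ∃ v : X,
      (∀ j, ‖B.coord j v‖ ≤ c₀ * T) ∧ (∀ j, j < n → B.coord j v = 0) ∧
      (∀ j, m ≤ j → B.coord j v = 0) ∧ ε < ‖Gf M i x₀ v‖ := by
    intro n
    obtain ⟨h, hhT, hbig⟩ := hcon n
    set t := h - proj B n h with ht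
    have htt : Tendsto (fun m => Gf M i x₀ (proj B m t)) atTop (nhds (Gf M i x₀ t)) :=
      ((Gf_continuous M i x₀).tendsto t).comp (proj_tendsto B t)
    have hev : ∀ᶠ m in atTop, ε < ‖Gf M i x₀ (proj B m t)‖ :=
      htt.norm.eventually_const_lt hbig
    obtain ⟨m, hm1, hm2⟩ := (hev.and (eventually_ge_atTop n)).exists
    refine ⟨m, hm2, proj B m t, ?_, ?_, ?_, hm1⟩
    · intro j
      rw [coord_proj]
      split
      · rw [ht, coord_tail]
        split
        · simp only [norm_zero]; exact mul_nonneg hc₀ hT.le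
        · exact le_trans (hcoordle j h) (mul_le_mul_of_nonneg_left hhT hc₀)
      · simp only [norm_zero]; exact mul_nonneg hc₀ hT.le
    · intro j hj
      rw [coord_proj]
      split
      · rw [ht, coord_tail, if_pos hj]
      · rfl
    · intro j hj
      rw [coord_proj, if_neg (by omega)]
  choose m hmge v hvcoord hvlow hvhigh hvbig using step
  set nseq : ℕ → ℕ := fun q => Nat.rec 0 (fun _ prev => m prev) q with hnseq
  have hnseqS : ∀ q, nseq (q+1) = m (nseq q) := fun q => rfl
  have hmono : Monotone nseq :=
    monotone_nat_of_le_succ (fun q => by rw [hnseqS]; exact hmge _)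
  set V : ℕ → X := fun q => v (nseq q) with hV
  have hVcoord : ∀ (q : ℕ) (j : ℕ), ‖B.coord j (V q)‖ ≤ c₀ * T := fun q j => hvcoord _ j
  have hVbig : ∀ q : ℕ, ε < ‖Gf M i x₀ (V q)‖ := fun q => hvbig _
  have hVsupp : ∀ (q j : ℕ), B.coord j (V q) ≠ 0 → nseq q ≤ j ∧ j < nseq (q+1) := by
    intro q j hne
    constructor
    · by_contra hlt
      exact hne (hvlow _ j (by omega))
    · by_contra hge
      refine hne (hvhigh _ j ?_)
      rw [hnseqS] at hge
      omega
  have hdisj : ∀ (j : ℕ) (q q' : ℕ), q ≠ q' →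
      B.coord j (V q) = 0 ∨ B.coord j (V q') = 0 := by
    intro j q q' hqq
    by_contra hcon2
    push_neg at hcon2
    obtain ⟨h1, h2⟩ := hcon2
    obtain ⟨ha1, ha2⟩ := hVsupp q j h1
    obtain ⟨hb1, hb2⟩ := hVsupp q' j h2
    rcases Nat.lt_or_ge q q' with hlt | hge
    · have := hmono (show q+1 ≤ q' from hlt); omega
    · have hlt' : q' < q := by omega
      have := hmono (show q'+1 ≤ q from hlt'); omega
  -- number of blocks
  set Q : ℕ := Nat.ceil ((D/ε)^2) + 1 with hQdef
  set b : Fin Q → ℕ := fun q => (N+1)^((q:ℕ)+1) with hb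
  set u : Fin Q → X := fun q => V q with hu
  set L : ℕ := N * (N+1)^Q + 1 with hLdef
  set cf : ℕ → ℂ := fun e => ∑ k : Fin (N+1), ∑ r ∈ Finset.univ.filter
      (fun r : Fin k → Option (Fin Q) =>
        (∑ s, (r s).elim 0 (fun p => (N+1)^((p:ℕ)+1))) = e),
      M k (fun s => (r s).elim x₀ u) with hcf
  set φ : ℂ → ℂ := fun ω => Pf M (x₀ + ∑ q : Fin Q, ω^(b q) • u q) with hφdef
  have hwb : ∀ (k : Fin (N+1)) (r : Fin (k:ℕ) → Option (Fin Q)),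
      (∑ s, (r s).elim 0 (fun p => (N+1)^((p:ℕ)+1))) < L := by
    intro k r
    have h1 : ∀ s, (r s).elim 0 (fun p => (N+1)^((p:ℕ)+1)) ≤ (N+1)^Q := by
      intro s
      match r s with
      | none => exact Nat.zero_le _
      | some p => exact Nat.pow_le_pow_right (by omega) (by omega)
    calc (∑ s, (r s).elim 0 (fun p => (N+1)^((p:ℕ)+1)))
        ≤ ∑ _s : Fin (k:ℕ), (N+1)^Q := Finset.sum_le_sum fun s _ => h1 s
      _ = (k:ℕ) * (N+1)^Q := by
          rw [Finset.sum_const, smul_eq_mul]; congr 1; simp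
      _ ≤ N * (N+1)^Q := Nat.mul_le_mul_right _ (by omega)
      _ < L := by omega
  have hφ : ∀ ω : ℂ, ‖ω‖ = 1 → φ ω = ∑ e ∈ Finset.range L, cf e * ω ^ e := by
    intro ω hω
    rw [hφdef]
    show Pf M (x₀ + ∑ q : Fin Q, ω^(b q) • u q) = _
    rw [Pf_expansion M x₀ Q u (fun q => ω ^ b q)]
    have hprod : ∀ (k : Fin (N+1)) (r : Fin (k:ℕ) → Option (Fin Q)),
        (∏ s, (r s).elim 1 (fun q => ω ^ b q))
          = ω ^ (∑ s, (r s).elim 0 (fun p => (N+1)^((p:ℕ)+1))) := by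
      intro k r
      rw [← Finset.prod_pow_eq_pow_sum]
      refine Finset.prod_congr rfl fun s _ => ?_
      match r s with
      | none => simp
      | some p => rfl
    calc ∑ k : Fin (N+1), ∑ r : Fin (k:ℕ) → Option (Fin Q),
            (∏ s, (r s).elim 1 (fun q => ω ^ b q)) * M k (fun s => (r s).elim x₀ u)
        = ∑ k : Fin (N+1), ∑ e ∈ Finset.range L,
            ∑ r ∈ Finset.univ.filter (fun r : Fin (k:ℕ) → Option (Fin Q) =>
              (∑ s, (r s).elim 0 (fun p => (N+1)^((p:ℕ)+1))) = e),
            (∏ s, (r s).elim 1 (fun q => ω ^ b q)) * M k (fun s => (r s).elim x₀ u) := by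
          refine Finset.sum_congr rfl fun k _ => ?_
          exact (Finset.sum_fiberwise_of_maps_to
            (fun r _ => Finset.mem_range.mpr (hwb k r)) _).symm
      _ = ∑ e ∈ Finset.range L, cf e * ω ^ e := by
          rw [Finset.sum_comm]
          refine Finset.sum_congr rfl fun e _ => ?_
          rw [hcf]
          show _ = (∑ k : Fin (N+1), ∑ r ∈ Finset.univ.filter
              (fun r : Fin (k:ℕ) → Option (Fin Q) =>
                (∑ s, (r s).elim 0 (fun p => (N+1)^((p:ℕ)+1))) = e),
              M k (fun s => (r s).elim x₀ u)) * ω ^ e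
          rw [Finset.sum_mul]
          refine Finset.sum_congr rfl fun k _ => ?_
          rw [Finset.sum_mul]
          refine Finset.sum_congr rfl fun r hr => ?_
          rw [hprod, (Finset.mem_filter.mp hr).2]
          ring
  have hφbound : ∀ ω : ℂ, ‖ω‖ = 1 → ‖φ ω‖ ≤ D := by
    intro ω hω
    rw [hφdef]
    show ‖Pf M (x₀ + ∑ q : Fin Q, ω^(b q) • u q)‖ ≤ D
    rw [hDdef]
    refine Pf_polydisk_bound M B C hC ρ hρpos _ (fun j => ?_)
    rw [map_add, map_sum]
    have hsumq : ∑ q : Fin Q, ‖B.coord j (ω^(b q) • u q)‖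
        = ∑ q : Fin Q, ‖B.coord j (u q)‖ := by
      refine Finset.sum_congr rfl fun q _ => ?_
      rw [map_smul, norm_smul, norm_pow, hω, one_pow, one_mul]
    have hone : ∑ q : Fin Q, ‖B.coord j (u q)‖ ≤ c₀ * T := by
      by_cases hex : ∃ q : Fin Q, B.coord j (u q) ≠ 0
      · obtain ⟨q₀, hq₀⟩ := hex
        have hzero : ∀ q ∈ (Finset.univ : Finset (Fin Q)), q ≠ q₀ →
            ‖B.coord j (u q)‖ = 0 := by
          intro q _ hne
          rw [norm_eq_zero]
          rcases hdisj j (q : ℕ) (q₀ : ℕ) (fun hh => hne (Fin.ext hh)) with h0 | h0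
          · exact h0
          · exact absurd h0 hq₀
        calc ∑ q : Fin Q, ‖B.coord j (u q)‖ = ‖B.coord j (u q₀)‖ :=
              Finset.sum_eq_single_of_mem q₀ (Finset.mem_univ _) hzero
          _ ≤ c₀ * T := hVcoord _ j
      · push_neg at hex
        have hz : ∑ q : Fin Q, ‖B.coord j (u q)‖ = 0 :=
          Finset.sum_eq_zero fun q _ => by rw [hex q, norm_zero]
        rw [hz]
        exact mul_nonneg hc₀ hT.le
    calc ‖B.coord j x₀ + ∑ q : Fin Q, B.coord j (ω^(b q) • u q)‖
        ≤ ‖B.coord j x₀‖ + ‖∑ q : Fin Q, B.coord j (ω^(b q) • u q)‖ := norm_add_le _ _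
      _ ≤ σ + ∑ q : Fin Q, ‖B.coord j (ω^(b q) • u q)‖ := by
          refine add_le_add (hcoordle j x₀) (norm_sum_le _ _)
      _ = σ + ∑ q : Fin Q, ‖B.coord j (u q)‖ := by rw [hsumq]
      _ ≤ σ + c₀ * T := by linarith
      _ < ρ := by rw [hρdef]; linarith
  have hcoeff : ∀ q : Fin Q, cf (i * (N+1)^((q:ℕ)+1)) = Gf M i x₀ (u q) := by
    intro q
    rw [hcf]
    exact coeff_ident M x₀ Q u i hi1 hiN q
  have hpars := parseval (show 0 < L by omega) cf φ D hφ hφbound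
  -- lower bound
  have hmem : ∀ q : Fin Q, i * (N+1)^((q:ℕ)+1) ∈ Finset.range L := by
    intro q
    rw [Finset.mem_range]
    calc i * (N+1)^((q:ℕ)+1) ≤ N * (N+1)^Q :=
          Nat.mul_le_mul hiN (Nat.pow_le_pow_right (by omega)
            (by have := q.isLt; omega))
      _ < L := by omega
  have hNge1 : 1 ≤ N := le_trans hi1 hiN
  have hinj : ∀ q ∈ (Finset.univ : Finset (Fin Q)),
      ∀ q' ∈ (Finset.univ : Finset (Fin Q)),
      i * (N+1)^((q:ℕ)+1) = i * (N+1)^((q':ℕ)+1) → q = q' := by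
    intro q _ q' _ heq
    have h1 : (N+1)^((q:ℕ)+1) = (N+1)^((q':ℕ)+1) :=
      Nat.eq_of_mul_eq_mul_left (by omega) heq
    have h2 : (q:ℕ)+1 = (q':ℕ)+1 :=
      Nat.pow_right_injective (by omega) h1
    exact Fin.ext (by omega)
  have hlow : (Q : ℝ) * ε^2 ≤ ∑ e ∈ Finset.range L, ‖cf e‖^2 := by
    calc (Q : ℝ) * ε^2 = ∑ _q : Fin Q, ε^2 := by
          rw [Finset.sum_const, Finset.card_univ, Fintype.card_fin, nsmul_eq_mul]
      _ ≤ ∑ q : Fin Q, ‖cf (i * (N+1)^((q:ℕ)+1))‖^2 := by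
          refine Finset.sum_le_sum fun q _ => ?_
          have h3 : ε < ‖cf (i * (N+1)^((q:ℕ)+1))‖ := by
            rw [hcoeff q]; exact hVbig q
          nlinarith [norm_nonneg (cf (i * (N+1)^((q:ℕ)+1)))]
      _ = ∑ e ∈ Finset.univ.image (fun q : Fin Q => i * (N+1)^((q:ℕ)+1)), ‖cf e‖^2 :=
          by rw [Finset.sum_image hinj]
      _ ≤ ∑ e ∈ Finset.range L, ‖cf e‖^2 := by
          refine Finset.sum_le_sum_of_subset_of_nonneg ?_ (fun e _ _ => sq_nonneg _)
          intro e he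
          obtain ⟨q, _, rfl⟩ := Finset.mem_image.mp he
          exact hmem q
  -- contradiction
  have hQge : ((D/ε)^2 : ℝ) + 1 ≤ (Q : ℝ) := by
    rw [hQdef]
    push_cast
    have := Nat.le_ceil ((D/ε)^2)
    linarith
  have hDe : D = (D/ε) * ε := by field_simp
  nlinarith [hpars, hlow, hQge, sq_nonneg (D/ε), hε, sq_nonneg ε]

end Tail

end Stmt2Aux

open Stmt2Aux

set_option maxHeartbeats 2000000

/-- a continuous polynomial `P` on `X` (a finite sum of continuous `k`-linear
forms evaluated on the diagonal) which is bounded on `𝔻_X` is weakly continuous on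
bounded sets. -/
theorem stmt2 {X : Type*} [NormedAddCommGroup X] [NormedSpace ℂ X] [CompleteSpace X]
    (B : NormalizedSchauderBasisC X) (P : X → ℂ)
    (hP : ∃ (N : ℕ) (M : ∀ k : Fin (N + 1), ContinuousMultilinearMap ℂ (fun _ : Fin k => X) ℂ),
      ∀ x : X, P x = ∑ k : Fin (N + 1), M k (fun _ => x))
    (hbdd : ∃ C : ℝ, ∀ x ∈ polydisk B (fun _ => 1), ‖P x‖ ≤ C) :
    ∀ S : Set X, Bornology.IsBounded S → WeaklyContinuousOn P S := by
  intro S hS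
  obtain ⟨N, M, hPM⟩ := hP
  obtain ⟨C, hCb⟩ := hbdd
  have hPf : ∀ x, P x = Pf M x := hPM
  have hC : ∀ x ∈ polydisk B (fun _ => 1), ‖Pf M x‖ ≤ C := fun x hx => by
    rw [← hPf x]; exact hCb x hx
  obtain ⟨R₀, hR₀⟩ := (Metric.isBounded_iff_subset_closedBall 0).mp hS
  set R : ℝ := max R₀ 1 with hRdef
  have hR1 : (1:ℝ) ≤ R := le_max_right _ _
  have hSR : ∀ y ∈ S, ‖y‖ ≤ R := fun y hy => by
    have := hR₀ hy
    rw [Metric.mem_closedBall, dist_zero_right] at this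
    exact le_trans this (le_max_left _ _)
  obtain ⟨K, hK1, hKb⟩ := proj_bound B
  -- the key estimate
  have key : ∀ x₀ ∈ S, ∀ ε : ℝ, 0 < ε → ∃ (n : ℕ) (δ : ℝ), 0 < δ ∧ ∀ y ∈ S,
      (∀ j, j < n → ‖B.coord j y - B.coord j x₀‖ < δ) → ‖P y - P x₀‖ < ε := by
    intro x₀ hx₀S ε hε
    set T : ℝ := 2*R + 1 with hTdef
    have hT : 0 < T := by rw [hTdef]; linarith
    set T' : ℝ := (K+1)*T with hT'def
    have hTT' : K*T ≤ T' := by rw [hT'def]; nlinarith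
    have hT' : 0 < T' := by rw [hT'def]; nlinarith
    set ε' : ℝ := ε / (2*(N+1)) with hε'def
    have hε' : 0 < ε' := by rw [hε'def]; positivity
    -- tails for each i
    have htail : ∀ i ∈ Finset.Icc 1 N, ∃ n : ℕ, ∀ h : X, ‖h‖ ≤ T' →
        ‖Gf M i x₀ (h - proj B n h)‖ ≤ ε' := by
      intro i hi
      rw [Finset.mem_Icc] at hi
      exact tail_small M B C hC i hi.1 hi.2 x₀ T' hT' ε' hε'
    choose nf hnf using htail
    set n : ℕ := Finset.sup (Finset.Icc 1 N).attach (fun i => nf i.1 i.2) with hndef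
    have hntail : ∀ i ∈ Finset.Icc 1 N, ∀ h : X, ‖h‖ ≤ T →
        ‖Gf M i x₀ (h - proj B n h)‖ ≤ ε' := by
      intro i hi h hh
      set h' : X := h - proj B n h with hh'def
      have hn1 : nf i hi ≤ n :=
        Finset.le_sup (f := fun i : {x // x ∈ Finset.Icc 1 N} => nf i.1 i.2)
          (Finset.mem_attach _ ⟨i, hi⟩)
      have hh' : ‖h'‖ ≤ T' := by
        rw [hh'def]
        calc ‖h - proj B n h‖ = ‖proj B n h - h‖ := by rw [norm_sub_rev]
          _ ≤ K * ‖h‖ := hKb n h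
          _ ≤ K * T := by nlinarith
          _ ≤ T' := hTT'
      have hz : proj B (nf i hi) h' = 0 := by
        rw [hh'def, map_sub, proj_comp B _ n hn1, sub_self]
      have h2 := hnf i hi h' hh'
      rw [hz, sub_zero] at h2
      exact h2
    -- Lipschitz constant
    set Λ : ℝ := ∑ k : Fin (N+1), ‖M k‖ * (k:ℕ) * (R + K*T)^((k:ℕ)-1) with hΛdef
    have hΛnn : 0 ≤ Λ := Finset.sum_nonneg fun k _ => by positivity
    set δ : ℝ := ε / (2 * (Λ+1) * (n+1)) with hδdef
    have hδ : 0 < δ := by rw [hδdef]; positivity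
    refine ⟨n, δ, hδ, fun y hyS hyclose => ?_⟩
    set h : X := y - x₀ with hhdef
    have hhnorm : ‖h‖ ≤ T := by
      rw [hhdef]
      calc ‖y - x₀‖ ≤ ‖y‖ + ‖x₀‖ := norm_sub_le _ _
        _ ≤ R + R := add_le_add (hSR y hyS) (hSR x₀ hx₀S)
        _ ≤ T := by rw [hTdef]; linarith
    set t : X := h - proj B n h with htdef
    have htnorm : ‖t‖ ≤ K*T := by
      rw [htdef]
      calc ‖h - proj B n h‖ = ‖proj B n h - h‖ := by rw [norm_sub_rev]
        _ ≤ K * ‖h‖ := hKb n h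
        _ ≤ K * T := by nlinarith
    have hpnorm : ‖proj B n h‖ ≤ n * δ := by
      rw [proj_apply]
      calc ‖∑ j ∈ Finset.range n, B.coord j h • B.e j‖
          ≤ ∑ j ∈ Finset.range n, ‖B.coord j h • B.e j‖ := norm_sum_le _ _
        _ ≤ ∑ _j ∈ Finset.range n, δ := by
            refine Finset.sum_le_sum fun j hj => ?_
            rw [norm_smul, B.norm_e, mul_one]
            have := hyclose j (Finset.mem_range.mp hj)
            rw [hhdef, map_sub]
            exact le_of_lt this
        _ = n * δ := by rw [Finset.sum_const, Finset.card_range, nsmul_eq_mul]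
    -- decomposition
    have hdecomp : P y - P x₀ = (Pf M (x₀ + h) - Pf M (x₀ + t))
        + (Pf M (x₀ + t) - Pf M x₀) := by
      rw [hPf y, hPf x₀]
      have : x₀ + h = y := by rw [hhdef]; abel
      rw [this]; ring
    -- first piece
    have hfirst : ‖Pf M (x₀ + h) - Pf M (x₀ + t)‖ ≤ Λ * (n * δ) := by
      have ha : ‖x₀ + h‖ ≤ R + K*T := by
        have : x₀ + h = y := by rw [hhdef]; abel
        rw [this]
        have := hSR y hyS
        nlinarith [mul_nonneg (le_trans zero_le_one hK1) hT.le]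
      have hb : ‖x₀ + t‖ ≤ R + K*T := by
        calc ‖x₀ + t‖ ≤ ‖x₀‖ + ‖t‖ := norm_add_le _ _
          _ ≤ R + K*T := add_le_add (hSR x₀ hx₀S) htnorm
      have hRb : (0:ℝ) ≤ R + K*T := by nlinarith
      have hlip := Pf_lipschitz M (R + K*T) hRb (x₀ + h) (x₀ + t) ha hb
      have hab : x₀ + h - (x₀ + t) = proj B n h := by rw [htdef]; abel
      rw [hab] at hlip
      calc ‖Pf M (x₀ + h) - Pf M (x₀ + t)‖ ≤ Λ * ‖proj B n h‖ := hlip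
        _ ≤ Λ * (n * δ) := mul_le_mul_of_nonneg_left hpnorm hΛnn
    -- second piece
    have hsecond : ‖Pf M (x₀ + t) - Pf M x₀‖ ≤ N * ε' := by
      have hone : x₀ + t = x₀ + (1:ℂ) • t := by rw [one_smul]
      rw [hone, Pf_single M x₀ t 1]
      have hsplit : ∑ i ∈ Finset.range (N+1), (1:ℂ) ^ i * Gf M i x₀ t
          = Gf M 0 x₀ t + ∑ i ∈ (Finset.range (N+1)).erase 0, (1:ℂ)^i * Gf M i x₀ t := by
        rw [← Finset.add_sum_erase _ _ (Finset.mem_range.mpr (Nat.succ_pos N))]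
        rw [pow_zero, one_mul]
      rw [hsplit, Gf_zero, add_sub_cancel_left]
      calc ‖∑ i ∈ (Finset.range (N+1)).erase 0, (1:ℂ)^i * Gf M i x₀ t‖
          ≤ ∑ i ∈ (Finset.range (N+1)).erase 0, ‖(1:ℂ)^i * Gf M i x₀ t‖ := norm_sum_le _ _
        _ ≤ ∑ _i ∈ (Finset.range (N+1)).erase 0, ε' := by
            refine Finset.sum_le_sum fun i hi => ?_
            rw [one_pow, one_mul]
            have hmem : i ∈ Finset.Icc 1 N := by
              rw [Finset.mem_erase, Finset.mem_range] at hi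
              rw [Finset.mem_Icc]
              omega
            exact hntail i hmem h hhnorm
        _ = ((Finset.range (N+1)).erase 0).card * ε' := by
            rw [Finset.sum_const, nsmul_eq_mul]
        _ = N * ε' := by
            rw [Finset.card_erase_of_mem (Finset.mem_range.mpr (Nat.succ_pos N)),
              Finset.card_range]
            norm_num
    -- combine
    calc ‖P y - P x₀‖
        = ‖(Pf M (x₀ + h) - Pf M (x₀ + t)) + (Pf M (x₀ + t) - Pf M x₀)‖ := by rw [hdecomp]
      _ ≤ ‖Pf M (x₀ + h) - Pf M (x₀ + t)‖ + ‖Pf M (x₀ + t) - Pf M x₀‖ := norm_add_le _ _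
      _ ≤ Λ * (n * δ) + N * ε' := add_le_add hfirst hsecond
      _ < ε := by
          have hstep : ((Λ+1)*((n:ℝ)+1)) * δ = ε/2 := by
            rw [hδdef]
            field_simp
          have h1 : Λ * (n*δ) < ε/2 := by
            rw [← hstep]
            have he1 : Λ * ((n:ℝ)*δ) = (Λ*(n:ℝ))*δ := by ring
            rw [he1]
            apply mul_lt_mul_of_pos_right ?_ hδ
            nlinarith [Nat.cast_nonneg (α := ℝ) n]
          have hstep2 : ((N:ℝ)+1) * ε' = ε/2 := by
            rw [hε'def]
            field_simp
          have h2 : (N:ℝ) * ε' ≤ ε/2 := by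
            rw [← hstep2]
            nlinarith [hε'.le]
          linarith
  -- conclude weak continuity
  intro z hz
  obtain ⟨x₀, hx₀S, rfl⟩ := hz
  have goal : Tendsto (fun z : WeakSpace ℂ X => P ((toWeakSpace ℂ X).symm z))
      (nhdsWithin (toWeakSpace ℂ X x₀) ((toWeakSpace ℂ X) '' S))
      (nhds (P ((toWeakSpace ℂ X).symm (toWeakSpace ℂ X x₀)))) := by
    rw [Metric.tendsto_nhds]
    intro ε hε
    obtain ⟨n, δ, hδ, hkey⟩ := key x₀ hx₀S ε hε
    set U : Set (WeakSpace ℂ X) := {z | ∀ j, j < n →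
      ‖B.coord j ((toWeakSpace ℂ X).symm z) - B.coord j x₀‖ < δ} with hU
    have hopen : IsOpen U := by
      have hUeq : U = ⋂ j ∈ Finset.range n,
          {z : WeakSpace ℂ X | ‖B.coord j ((toWeakSpace ℂ X).symm z) - B.coord j x₀‖ < δ} := by
        ext z
        simp [hU, Finset.mem_range]
      rw [hUeq]
      refine isOpen_biInter_finset fun j _ => ?_
      have hg : Continuous fun z : WeakSpace ℂ X => B.coord j ((toWeakSpace ℂ X).symm z) :=
        WeakBilin.eval_continuous ((topDualPairing ℂ X).flip) (B.coord j)
      exact isOpen_Iio.preimage ((hg.sub continuous_const).norm)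
    have hmemU : toWeakSpace ℂ X x₀ ∈ U := by
      rw [hU, Set.mem_setOf_eq]
      intro j hj
      rw [LinearEquiv.symm_apply_apply, sub_self, norm_zero]
      exact hδ
    have hUnhds : U ∈ nhdsWithin (toWeakSpace ℂ X x₀) ((toWeakSpace ℂ X) '' S) :=
      mem_nhdsWithin_of_mem_nhds (hopen.mem_nhds hmemU)
    filter_upwards [hUnhds, self_mem_nhdsWithin] with z hzU hzS
    obtain ⟨y, hyS, rfl⟩ := hzS
    rw [dist_eq_norm]
    rw [hU, Set.mem_setOf_eq] at hzU
    have h1 : ∀ j, j < n → ‖B.coord j y - B.coord j x₀‖ < δ := by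
      intro j hj
      have := hzU j hj
      rwa [LinearEquiv.symm_apply_apply] at this
    have h2 := hkey y hyS h1
    simpa [LinearEquiv.symm_apply_apply] using h2
  exact goal
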